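/- Let ω be irrational and satisfy the Diophantine condition |mω + n| ≥ γ|m|^{-τ} for all (m,n) ∈ ℤ² \ {(0,0)}, where 1 < τ < 2 and γ > 0, and let l ≥ 4 be an integer. Let J ∈ C^l(ℝ) be 2π_p-periodic with ∫₀^{2π_p} J(x) dx = 0. Then there exists a 2π_p-periodic function Ω ∈ C^{l-3}(ℝ) solving the homological equation Ω(x + 2ωπ_p) − Ω(x) = J(x) for all x ∈ ℝ. -/

import Mathlib

open Complex Real Set MeasureTheory intervalIntegral

section auxlemmas

lemma aux_periodic_deriv {E : Type*} [NormedAddCommGroup E] [NormedSpace ℝ E]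
    {f : ℝ → E} {c : ℝ} (h : Function.Periodic f c) : Function.Periodic (deriv f) c := by
  intro x
  have h2 : (fun y => f (y + c)) = f := funext h
  rw [← deriv_comp_add_const, h2]

lemma aux_periodic_iteratedDeriv {E : Type*} [NormedAddCommGroup E] [NormedSpace ℝ E]
    {f : ℝ → E} {c : ℝ} (h : Function.Periodic f c) (k : ℕ) :
    Function.Periodic (iteratedDeriv k f) c := by
  induction k with
  | zero => simpa [iteratedDeriv_zero] using h
  | succ k ih => rw [iteratedDeriv_succ]; exact aux_periodic_deriv ih

lemma aux_hasDerivAt_cexp (c : ℂ) (x : ℝ) :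
    HasDerivAt (fun y : ℝ => Complex.exp (c * y)) (c * Complex.exp (c * x)) x := by
  have h1 : HasDerivAt (fun y : ℝ => c * (y : ℂ)) c x := by
    simpa using (Complex.ofRealCLM.hasDerivAt (x := x)).const_mul c
  have := h1.cexp
  convert this using 1
  ring

lemma aux_iteratedDeriv_cexp (d c : ℂ) (k : ℕ) :
    iteratedDeriv k (fun x : ℝ => d * Complex.exp (c * x)) =
      fun x : ℝ => d * c ^ k * Complex.exp (c * x) := by
  induction k with
  | zero => simp
  | succ k ih =>
    rw [iteratedDeriv_succ, ih]
    funext x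
    rw [(((aux_hasDerivAt_cexp c x).const_mul (d * c ^ k))).deriv]
    ring

lemma aux_contDiff_cexp (d c : ℂ) (N : ℕ∞) :
    ContDiff ℝ N fun x : ℝ => d * Complex.exp (c * x) :=
  contDiff_const.mul ((contDiff_const.mul Complex.ofRealCLM.contDiff).cexp)

lemma aux_abs_exp_sub_one (θ : ℝ) :
    ‖Complex.exp (θ * Complex.I) - 1‖ = 2 * |Real.sin (θ / 2)| := by
  have hfac : Complex.exp (θ * Complex.I) - 1
      = Complex.exp (((θ/2 : ℝ) : ℂ) * Complex.I) * (2 * Complex.sin ((θ/2 : ℝ) : ℂ) * Complex.I) := by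
    have h2 : (θ : ℂ) * I = ((θ/2 : ℝ) : ℂ) * I + ((θ/2 : ℝ) : ℂ) * I := by push_cast; ring
    rw [h2, Complex.exp_add, Complex.sin, neg_mul, Complex.exp_neg]
    have hne := Complex.exp_ne_zero (((θ/2 : ℝ) : ℂ) * I)
    field_simp
    ring_nf
    rw [Complex.I_sq]
    ring
  rw [hfac, norm_mul, Complex.norm_exp_ofReal_mul_I, one_mul, norm_mul, norm_mul,
    Complex.norm_two, Complex.norm_I, mul_one, ← Complex.ofReal_sin, Complex.norm_real,
    Real.norm_eq_abs]

lemma aux_sin_lower (t : ℝ) (h : |t| ≤ 1/2) : 2 * |t| ≤ |Real.sin (π * t)| := by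
  have hπ := Real.pi_pos
  have h0 : 0 ≤ π * |t| := by positivity
  have h2 : π * |t| ≤ π / 2 := by nlinarith [abs_nonneg t]
  have h3 : 2 / π * (π * |t|) ≤ Real.sin (π * |t|) := Real.mul_le_sin h0 h2
  have h4 : 2 / π * (π * |t|) = 2 * |t| := by field_simp
  have h5 : Real.sin (π * |t|) ≤ |Real.sin (π * t)| := by
    rcases abs_cases t with ⟨h1, _⟩ | ⟨h1, _⟩
    · rw [h1]; exact le_abs_self _
    · rw [h1, mul_neg, Real.sin_neg]; exact neg_le_abs _
  linarith

end auxlemmas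



/-- The `p`-analogue of `π`: `π_p = 2π (p-1)^{1/p} / (p sin(π/p))`. -/
noncomputable def pip (p : ℝ) : ℝ :=
  2 * Real.pi * (p - 1) ^ (1 / p) / (p * Real.sin (Real.pi / p))

/-- **solution of the homological equation.** Let `ω` be a Diophantine
irrational (`|mω + n| ≥ γ|m|^{-τ}`, `1 < τ < 2`, `γ > 0`) and `l ≥ 4`.  If
`J ∈ C^l(ℝ)` is `2π_p`-periodic with zero mean, then there is a `2π_p`-periodic
`Ω ∈ C^{l-3}(ℝ)` with `Ω(x + 2ωπ_p) − Ω(x) = J(x)` for all `x`. -/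
theorem homological_equation
    (p ω γ τ : ℝ) (l : ℕ) (J : ℝ → ℝ)
    (hp : 2 ≤ p)
    (hωirr : Irrational ω)
    (hτ1 : 1 < τ) (hτ2 : τ < 2) (hγ : 0 < γ)
    (hdio : ∀ m n : ℤ, (m, n) ≠ (0, 0) → γ / |(m : ℝ)| ^ τ ≤ |(m : ℝ) * ω + (n : ℝ)|)
    (hl : 4 ≤ l)
    (hJ : ContDiff ℝ (l : ℕ∞) J)
    (hJper : Function.Periodic J (2 * pip p))
    (hJmean : ∫ x in (0 : ℝ)..(2 * pip p), J x = 0) :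
    ∃ Ω : ℝ → ℝ, ContDiff ℝ ((l - 3 : ℕ) : ℕ∞) Ω ∧
      Function.Periodic Ω (2 * pip p) ∧
      ∀ x : ℝ, Ω (x + 2 * ω * pip p) - Ω x = J x := by
  have hπ := Real.pi_pos
  have hp0 : (0:ℝ) < p := by linarith
  have hpp : 0 < pip p := by
    have h1 : 0 < (p - 1) ^ (1/p) := Real.rpow_pos_of_pos (by linarith) _
    have h2 : 0 < Real.sin (π / p) :=
      Real.sin_pos_of_pos_of_lt_pi (by positivity) (div_lt_self hπ (by linarith))
    unfold pip
    positivity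
  set T := 2 * pip p with hTdef
  have hT : 0 < T := by positivity
  have hTne : T ≠ 0 := hT.ne'
  haveI : Fact (0 < T) := ⟨hT⟩
  set m := l - 3 with hmdef
  have hm1 : 1 ≤ m := by omega
  set a := 2 * ω * pip p with hadef
  have haT : a = ω * T := by rw [hadef, hTdef]; ring
  -- the complexified function
  set fc : ℝ → ℂ := fun x => (J x : ℂ) with hfcdef
  have hfc : ContDiff ℝ (l : ℕ∞) fc := Complex.ofRealCLM.contDiff.comp hJ
  have hfcper : Function.Periodic fc T := fun x => by simp [hfcdef, hJper x]
  have gper : ∀ k, Function.Periodic (iteratedDeriv k fc) T :=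
    fun k => aux_periodic_iteratedDeriv hfcper k
  have gcont : ∀ k, k ≤ l → Continuous (iteratedDeriv k fc) := by
    intro k hk
    exact hfc.continuous_iteratedDeriv k (by exact_mod_cast hk)
  have hb : (0:ℝ) < 0 + T := by linarith
  -- Fourier coefficients of the iterated derivatives
  set c : ℕ → ℤ → ℂ := fun k n => fourierCoeffOn hb (iteratedDeriv k fc) n with hcdef
  -- the recursion for coefficients
  have hrec : ∀ n : ℤ, n ≠ 0 → ∀ k, k < l →
      ‖c k n‖ = T / (2 * π * |(n:ℝ)|) * ‖c (k+1) n‖ := by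
    intro n hn k hk
    have hdiff : ∀ x ∈ Set.uIcc (0:ℝ) (0+T),
        HasDerivAt (iteratedDeriv k fc) (iteratedDeriv (k+1) fc x) x := by
      intro x _
      rw [iteratedDeriv_succ]
      exact ((hfc.differentiable_iteratedDeriv k (by exact_mod_cast hk)) x).hasDerivAt
    have hint : IntervalIntegrable (iteratedDeriv (k+1) fc) MeasureTheory.volume 0 (0+T) :=
      (gcont (k+1) (by omega)).intervalIntegrable _ _
    have key := fourierCoeffOn_of_hasDerivAt hb hn hdiff hint
    have hz : iteratedDeriv k fc (0 + T) - iteratedDeriv k fc 0 = 0 := by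
      rw [gper k 0, sub_self]
    rw [hz, mul_zero, zero_sub] at key
    simp only [hcdef]
    rw [key, norm_mul, norm_neg, norm_mul]
    have h1 : ‖(1:ℂ) / (-2 * ↑π * I * ↑n)‖ = 1 / (2 * π * |(n:ℝ)|) := by
      rw [norm_div, norm_one]
      simp only [norm_mul, norm_neg, Complex.norm_two,
        Complex.norm_real, Real.norm_eq_abs, Complex.norm_I, Complex.norm_intCast]
      rw [abs_of_pos hπ]
      push_cast
      ring_nf
    have h2 : ‖((0 + T : ℝ) : ℂ) - ((0:ℝ) : ℂ)‖ = T := by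
      rw [← Complex.ofReal_sub, Complex.norm_real, Real.norm_eq_abs, zero_add, sub_zero,
        abs_of_pos hT]
    rw [h1, h2]
    ring
  -- uniform bound for the coefficients of the l-th derivative
  obtain ⟨M, hM⟩ := (isCompact_uIcc (a := (0:ℝ)) (b := 0+T)).exists_bound_of_continuousOn
    (gcont l le_rfl).continuousOn
  have hM0 : 0 ≤ M := le_trans (norm_nonneg _) (hM 0 Set.left_mem_uIcc)
  have hfnorm : ∀ (k : ℤ) (z : AddCircle (0 + T - 0)), ‖fourier k z‖ = 1 := by
    intro k z
    rw [fourier_apply]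
    exact Circle.norm_coe _
  have hcl : ∀ n : ℤ, ‖c l n‖ ≤ M := by
    intro n
    simp only [hcdef]
    rw [fourierCoeffOn_eq_integral, norm_smul]
    have h1 : ‖(1:ℝ) / (0 + T - 0)‖ = 1 / T := by
      rw [Real.norm_eq_abs, abs_div, abs_one, zero_add, sub_zero, abs_of_pos hT]
    rw [h1]
    have h2 : ‖∫ x in (0:ℝ)..(0+T), fourier (-n) (x : AddCircle (0+T-0)) •
        iteratedDeriv l fc x‖ ≤ M * |0 + T - 0| := by
      apply intervalIntegral.norm_integral_le_of_norm_le_const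
      intro x hx
      rw [norm_smul, hfnorm, one_mul]
      exact hM x (Set.uIoc_subset_uIcc hx)
    calc 1 / T * ‖∫ x in (0:ℝ)..(0+T), fourier (-n) (x : AddCircle (0+T-0)) •
          iteratedDeriv l fc x‖ ≤ 1 / T * (M * |0 + T - 0|) := by
          apply mul_le_mul_of_nonneg_left h2 (by positivity)
      _ = M := by rw [zero_add, sub_zero, abs_of_pos hT]; field_simp
  -- iterate the recursion
  have hiter : ∀ j, j ≤ l → ∀ n : ℤ, n ≠ 0 →
      ‖c 0 n‖ ≤ (T / (2 * π * |(n:ℝ)|)) ^ j * ‖c j n‖ := by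
    intro j
    induction j with
    | zero => intro _ n _; simp
    | succ j ih =>
      intro hj n hn
      calc ‖c 0 n‖ ≤ (T / (2 * π * |(n:ℝ)|)) ^ j * ‖c j n‖ := ih (by omega) n hn
        _ = (T / (2 * π * |(n:ℝ)|)) ^ j * (T / (2 * π * |(n:ℝ)|) * ‖c (j+1) n‖) := by
            rw [hrec n hn j (by omega)]
        _ = (T / (2 * π * |(n:ℝ)|)) ^ (j+1) * ‖c (j+1) n‖ := by ring
  have habs1 : ∀ n : ℤ, n ≠ 0 → (1:ℝ) ≤ |(n:ℝ)| := by
    intro n hn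
    have := Int.one_le_abs (by simpa using hn)
    calc (1:ℝ) = ((1:ℤ):ℝ) := by norm_num
      _ ≤ ((|n|:ℤ):ℝ) := by exact_mod_cast this
      _ = |(n:ℝ)| := by push_cast; ring
  set K1 : ℝ := (T / (2*π)) ^ l * M with hK1def
  have hK10 : 0 ≤ K1 := by positivity
  have hc0bound : ∀ n : ℤ, n ≠ 0 → ‖c 0 n‖ ≤ K1 * |(n:ℝ)| ^ (-(l:ℝ)) := by
    intro n hn
    have hn1 := habs1 n hn
    have hnpos : (0:ℝ) < |(n:ℝ)| := by linarith
    have heq : (T / (2 * π * |(n:ℝ)|)) ^ l * M = K1 * |(n:ℝ)| ^ (-(l:ℝ)) := by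
      rw [hK1def, Real.rpow_neg hnpos.le, Real.rpow_natCast,
        show T / (2 * π * |(n:ℝ)|) = T / (2*π) * (|(n:ℝ)|)⁻¹ by
          rw [mul_comm (2*π), ← div_div, div_eq_mul_inv]; ring,
        mul_pow, inv_pow]
      ring
    calc ‖c 0 n‖ ≤ (T / (2 * π * |(n:ℝ)|)) ^ l * ‖c l n‖ := hiter l le_rfl n hn
      _ ≤ (T / (2 * π * |(n:ℝ)|)) ^ l * M := by
          apply mul_le_mul_of_nonneg_left (hcl n) (by positivity)
      _ = K1 * |(n:ℝ)| ^ (-(l:ℝ)) := heq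
  -- the exponentials and small divisors
  set cc : ℤ → ℂ := fun n => ((2 * π * (n:ℝ) / T : ℝ) : ℂ) * Complex.I with hccdef
  set en : ℤ → ℂ := fun n => Complex.exp (((2 * π * ((n:ℝ) * ω) : ℝ) : ℂ) * Complex.I)
    with hendef
  have hexp_a : ∀ n : ℤ, Complex.exp (cc n * (a:ℂ)) = en n := by
    intro n
    have h2 : (2 * π * (n:ℝ) / T) * a = 2 * π * ((n:ℝ) * ω) := by
      rw [haT]; field_simp
    have h1 : cc n * (a:ℂ) = (((2 * π * (n:ℝ) / T) * a : ℝ) : ℂ) * Complex.I := by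
      simp only [hccdef]; push_cast; ring
    rw [hendef, h1, h2]
  have hden : ∀ n : ℤ, n ≠ 0 → 4 * γ * |(n:ℝ)| ^ (-τ) ≤ ‖en n - 1‖ := by
    intro n hn
    have hn1 := habs1 n hn
    have hnpos : (0:ℝ) < |(n:ℝ)| := by linarith
    rw [hendef]
    rw [aux_abs_exp_sub_one,
      show (2 * π * ((n:ℝ) * ω)) / 2 = π * ((n:ℝ) * ω) by ring]
    set r : ℤ := round ((n:ℝ) * ω) with hrdef
    have hsin : |Real.sin (π * ((n:ℝ) * ω))| = |Real.sin (π * ((n:ℝ) * ω - r))| := by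
      rw [show π * ((n:ℝ) * ω) = π * ((n:ℝ) * ω - r) + r * π by ring,
        Real.sin_add_int_mul_pi]
      have hpm : |((-1:ℝ)) ^ r| = 1 := by
        rcases Int.even_or_odd r with he | ho
        · rw [he.neg_one_zpow, abs_one]
        · rw [ho.neg_one_zpow, abs_neg, abs_one]
      rw [abs_mul, hpm, one_mul]
    have htle : |(n:ℝ) * ω - r| ≤ 1/2 := abs_sub_round _
    have ht2 : 2 * |(n:ℝ) * ω - r| ≤ |Real.sin (π * ((n:ℝ) * ω - r))| :=
      aux_sin_lower _ htle
    have hdio' : γ * |(n:ℝ)| ^ (-τ) ≤ |(n:ℝ) * ω - r| := by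
      have h3 := hdio n (-r) (by simp [hn])
      rw [Real.rpow_neg hnpos.le]
      calc γ * (|(n:ℝ)| ^ τ)⁻¹ = γ / |(n:ℝ)| ^ τ := by rw [div_eq_mul_inv]
        _ ≤ |(n:ℝ) * ω + ((-r : ℤ) : ℝ)| := h3
        _ = |(n:ℝ) * ω - r| := by push_cast; ring_nf
    rw [hsin]
    linarith
  have hdenne : ∀ n : ℤ, n ≠ 0 → en n - 1 ≠ 0 := by
    intro n hn h
    have hn1 := habs1 n hn
    have h1 : 0 < 4 * γ * |(n:ℝ)| ^ (-τ) := by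
      have := Real.rpow_pos_of_pos (show (0:ℝ) < |(n:ℝ)| by linarith) (-τ)
      positivity
    have h2 := hden n hn
    rw [h, norm_zero] at h2
    linarith
  -- the coefficients of the solution
  set d : ℤ → ℂ := fun n => if n = 0 then 0 else c 0 n / (en n - 1) with hddef
  set K : ℝ := K1 / (4 * γ) with hKdef
  have hK0 : 0 ≤ K := by positivity
  have hdbound : ∀ n : ℤ, n ≠ 0 → ‖d n‖ ≤ K * |(n:ℝ)| ^ (τ - (l:ℝ)) := by
    intro n hn
    have hn1 := habs1 n hn
    have hnpos : (0:ℝ) < |(n:ℝ)| := by linarith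
    have hrne : (0:ℝ) < 4 * γ * |(n:ℝ)| ^ (-τ) := by
      have := Real.rpow_pos_of_pos hnpos (-τ)
      positivity
    have h1 : ‖d n‖ = ‖c 0 n‖ / ‖en n - 1‖ := by
      simp only [hddef, if_neg hn]
      rw [norm_div]
    rw [h1]
    calc ‖c 0 n‖ / ‖en n - 1‖ ≤ (K1 * |(n:ℝ)| ^ (-(l:ℝ))) / (4 * γ * |(n:ℝ)| ^ (-τ)) := by
          apply div_le_div₀ (by positivity) (hc0bound n hn) hrne (hden n hn)
      _ = K * |(n:ℝ)| ^ (τ - (l:ℝ)) := by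
          rw [show τ - (l:ℝ) = -(l:ℝ) - (-τ) by ring, Real.rpow_sub hnpos, hKdef]
          field_simp
  -- the building blocks of the solution
  set G : ℤ → ℝ → ℂ := fun n x => d n * Complex.exp (cc n * (x:ℂ)) with hGdef
  set B : ℝ := (max 1 (2*π/T)) ^ m with hBdef
  have hB0 : 0 ≤ B := by positivity
  set v : ℤ → ℝ := fun n => (K * B) * |(n:ℝ)| ^ (τ - 3) with hvdef
  have hccnorm : ∀ n : ℤ, ‖cc n‖ = 2 * π * |(n:ℝ)| / T := by
    intro n
    simp only [hccdef]
    rw [norm_mul, Complex.norm_real, Complex.norm_I,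
      mul_one, Real.norm_eq_abs, abs_div, abs_of_pos hT, abs_mul, abs_mul]
    rw [abs_of_pos hπ]
    norm_num
  have hexpnorm : ∀ (n : ℤ) (x : ℝ), ‖Complex.exp (cc n * (x:ℂ))‖ = 1 := by
    intro n x
    have h1 : cc n * (x:ℂ) = ((2 * π * (n:ℝ) / T * x : ℝ) : ℂ) * Complex.I := by
      simp only [hccdef]; push_cast; ring
    rw [h1, Complex.norm_exp_ofReal_mul_I]
  have hGnorm : ∀ (k : ℕ), k ≤ m → ∀ (n : ℤ) (x : ℝ), ‖iteratedFDeriv ℝ k (G n) x‖ ≤ v n := by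
    intro k hk n x
    rw [norm_iteratedFDeriv_eq_norm_iteratedDeriv]
    have hg : G n = fun x : ℝ => d n * Complex.exp (cc n * (x:ℂ)) := rfl
    rw [hg, aux_iteratedDeriv_cexp, norm_mul, norm_mul, hexpnorm, mul_one, norm_pow, hccnorm]
    by_cases hn : n = 0
    · subst hn
      have hd0 : d 0 = 0 := by simp [hddef]
      rw [hd0, norm_zero, zero_mul]
      simp only [hvdef]
      positivity
    · have hn1 := habs1 n hn
      have hnpos : (0:ℝ) < |(n:ℝ)| := by linarith
      have hkl : (2 * π / T) ^ k ≤ B := by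
        calc (2 * π / T) ^ k ≤ (max 1 (2*π/T)) ^ k :=
              pow_le_pow_left₀ (by positivity) (le_max_right _ _) k
          _ ≤ (max 1 (2*π/T)) ^ m := pow_le_pow_right₀ (le_max_left _ _) hk
      have hse : |(n:ℝ)| ^ (τ - (l:ℝ)) * |(n:ℝ)| ^ (k:ℕ) = |(n:ℝ)| ^ (τ - (l:ℝ) + k) := by
        rw [← Real.rpow_natCast |(n:ℝ)| k, ← Real.rpow_add hnpos]
      have hex : |(n:ℝ)| ^ (τ - (l:ℝ) + k) ≤ |(n:ℝ)| ^ (τ - 3) := by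
        apply Real.rpow_le_rpow_of_exponent_le hn1
        have h3 : (k:ℝ) + 3 ≤ (l:ℝ) := by exact_mod_cast (by omega : k + 3 ≤ l)
        linarith
      calc ‖d n‖ * (2 * π * |(n:ℝ)| / T) ^ k
          ≤ (K * |(n:ℝ)| ^ (τ - (l:ℝ))) * (2 * π * |(n:ℝ)| / T) ^ k := by
            apply mul_le_mul_of_nonneg_right (hdbound n hn) (by positivity)
        _ = K * (2 * π / T) ^ k * (|(n:ℝ)| ^ (τ - (l:ℝ)) * |(n:ℝ)| ^ (k:ℕ)) := by
            rw [show 2 * π * |(n:ℝ)| / T = (2 * π / T) * |(n:ℝ)| by ring, mul_pow]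
            ring
        _ = K * (2 * π / T) ^ k * |(n:ℝ)| ^ (τ - (l:ℝ) + k) := by rw [hse]
        _ ≤ K * B * |(n:ℝ)| ^ (τ - 3) := by
            apply mul_le_mul
            · exact mul_le_mul_of_nonneg_left hkl hK0
            · exact hex
            · positivity
            · positivity
        _ = v n := rfl
  have hvsum : Summable v := by
    have h1 := Real.summable_abs_int_rpow (b := 3 - τ) (by linarith)
    have h2 : (fun n : ℤ => (K * B) * |(n:ℝ)| ^ (-(3 - τ))) = v := by
      funext n
      rw [show -(3 - τ) = τ - 3 by ring]
    rw [← h2]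
    exact h1.mul_left _
  have hGsum : ∀ x : ℝ, Summable (fun n : ℤ => G n x) := by
    intro x
    apply Summable.of_norm_bounded hvsum
    intro n
    have := hGnorm 0 (by omega) n x
    rwa [norm_iteratedFDeriv_zero] at this
  have hGcd : ∀ n : ℤ, ContDiff ℝ (m : ℕ∞) (G n) := fun n => aux_contDiff_cexp _ _ _
  -- the candidate solution (complex-valued)
  set Ω₀ : ℝ → ℂ := fun x => ∑' n : ℤ, G n x with hΩ₀def
  have hΩ₀cd : ContDiff ℝ (m : ℕ∞) Ω₀ := by
    apply contDiff_tsum hGcd (fun k _ => hvsum)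
    intro k n x hk
    exact hGnorm k (by exact_mod_cast hk) n x
  have hGper : ∀ n : ℤ, Function.Periodic (G n) T := by
    intro n x
    have h2 : (2 * π * (n:ℝ) / T) * (x + T) = (2 * π * (n:ℝ) / T) * x + 2 * π * (n:ℝ) := by
      field_simp
    have h1 : cc n * ((x + T : ℝ) : ℂ) = cc n * (x:ℂ) + (n:ℂ) * (2 * ↑π * I) := by
      calc cc n * ((x + T : ℝ) : ℂ) = (((2 * π * (n:ℝ) / T) * (x + T) : ℝ) : ℂ) * I := by
            simp only [hccdef]; push_cast; ring
        _ = (((2 * π * (n:ℝ) / T) * x + 2 * π * (n:ℝ) : ℝ) : ℂ) * I := by rw [h2]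
        _ = cc n * (x:ℂ) + (n:ℂ) * (2 * ↑π * I) := by simp only [hccdef]; push_cast; ring
    simp only [hGdef]
    rw [h1, Complex.exp_add, Complex.exp_int_mul_two_pi_mul_I, mul_one]
  have hΩ₀per : Function.Periodic Ω₀ T := by
    intro x
    simp only [hΩ₀def]
    exact tsum_congr fun n => hGper n x
  -- the function on the circle
  have hliftcont : Continuous (hfcper.lift) := Continuous.quotient_liftOn' hfc.continuous _
  set F : C(AddCircle T, ℂ) := ⟨hfcper.lift, hliftcont⟩ with hFdef
  have hFcoe : ∀ y : ℝ, F (y : AddCircle T) = fc y := fun y => rfl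
  have hlift_eq : ⇑F = AddCircle.liftIco T 0 fc := by
    funext z
    obtain ⟨y, rfl⟩ := QuotientAddGroup.mk_surjective z
    have h0 : 0 ≤ y - ↑⌊y / T⌋ * T := Int.sub_floor_div_mul_nonneg y hT
    have h1 : y - ↑⌊y / T⌋ * T < T := Int.sub_floor_div_mul_lt y hT
    have hyy : ((y : ℝ) : AddCircle T) = ((y - ↑⌊y / T⌋ * T : ℝ) : AddCircle T) := by
      have h2 : (((↑⌊y / T⌋ * T : ℝ)) : AddCircle T) = 0 := by
        rw [show (↑⌊y / T⌋ * T : ℝ) = (⌊y / T⌋ : ℤ) • T from (zsmul_eq_mul T _).symm,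
          QuotientAddGroup.mk_zsmul]
        simp [AddCircle.coe_period]
      calc ((y : ℝ) : AddCircle T)
          = ((y - ↑⌊y / T⌋ * T : ℝ) : AddCircle T) + ((↑⌊y / T⌋ * T : ℝ) : AddCircle T) := by
            rw [← QuotientAddGroup.mk_add, sub_add_cancel]
        _ = ((y - ↑⌊y / T⌋ * T : ℝ) : AddCircle T) := by rw [h2, add_zero]
    calc F ((y : ℝ) : AddCircle T) = fc y := rfl
      _ = fc (y - ↑⌊y / T⌋ * T) := (hfcper.sub_int_mul_eq ⌊y / T⌋).symm
      _ = AddCircle.liftIco T 0 fc ((y - ↑⌊y / T⌋ * T : ℝ) : AddCircle T) :=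
          (AddCircle.liftIco_coe_apply ⟨h0, by rw [zero_add]; exact h1⟩).symm
      _ = AddCircle.liftIco T 0 fc ((y : ℝ) : AddCircle T) := by rw [← hyy]
  have hFcoeff : ∀ n : ℤ, fourierCoeff (⇑F) n = c 0 n := by
    intro n
    rw [hlift_eq, fourierCoeff_liftIco_eq]
    simp only [hcdef, iteratedDeriv_zero]
  have hc00 : c 0 0 = 0 := by
    simp only [hcdef, iteratedDeriv_zero]
    rw [fourierCoeffOn_eq_integral]
    simp only [neg_zero, fourier_zero, one_smul]
    have h3 : (∫ x in (0:ℝ)..(0+T), fc x) = (((∫ x in (0:ℝ)..(0+T), J x) : ℝ) : ℂ) :=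
      intervalIntegral.integral_ofReal
    rw [h3, zero_add, hJmean]
    simp
  have hFsumm : Summable fun n : ℤ => fourierCoeff (⇑F) n := by
    have hl1 : (1:ℝ) < (l:ℝ) := by
      have h4 : (4:ℝ) ≤ (l:ℝ) := by exact_mod_cast hl
      linarith
    have hg : Summable (fun n : ℤ => K1 * |(n:ℝ)| ^ (-(l:ℝ))) :=
      (Real.summable_abs_int_rpow hl1).mul_left K1
    apply Summable.of_norm_bounded_eventually hg
    rw [Filter.eventually_cofinite]
    apply Set.Finite.subset (Set.finite_singleton (0:ℤ))
    intro n hn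
    simp only [Set.mem_setOf_eq, not_le] at hn
    rw [Set.mem_singleton_iff]
    by_contra hne
    have h2 : ‖fourierCoeff (⇑F) n‖ ≤ K1 * |(n:ℝ)| ^ (-(l:ℝ)) := by
      rw [hFcoeff n]; exact hc0bound n hne
    exact absurd h2 (by push_neg; exact hn)
  -- conclusion
  refine ⟨fun x => (Ω₀ x).re, ?_, ?_, ?_⟩
  · exact (Complex.reCLM.contDiff).comp hΩ₀cd
  · intro x
    simp only
    rw [hΩ₀per x]
  · intro x
    have hterm : ∀ n : ℤ, G n (x + a) - G n x
        = fourierCoeff (⇑F) n • fourier n (x : AddCircle T) := by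
      intro n
      by_cases hn : n = 0
      · subst hn
        have hd0 : d 0 = 0 := by simp [hddef]
        simp only [hGdef, hd0, zero_mul, sub_zero, sub_self]
        rw [hFcoeff 0, hc00, zero_smul]
      · have hxa : ((x + a : ℝ) : ℂ) = (x:ℂ) + (a:ℂ) := by push_cast; ring
        simp only [hGdef]
        rw [hxa, mul_add, Complex.exp_add, hexp_a n]
        rw [show d n * (Complex.exp (cc n * (x:ℂ)) * en n) - d n * Complex.exp (cc n * (x:ℂ))
            = d n * (en n - 1) * Complex.exp (cc n * (x:ℂ)) by ring]
        have hdn : d n * (en n - 1) = c 0 n := by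
          simp only [hddef, if_neg hn]
          exact div_mul_cancel₀ _ (hdenne n hn)
        rw [hdn, hFcoeff n, smul_eq_mul]
        congr 1
        rw [fourier_coe_apply]
        congr 1
        simp only [hccdef]
        push_cast
        ring
    have key : Ω₀ (x + a) - Ω₀ x = ((J x : ℝ) : ℂ) := by
      have hsub : Ω₀ (x + a) - Ω₀ x = ∑' n : ℤ, (G n (x + a) - G n x) := by
        simp only [hΩ₀def]
        exact (Summable.tsum_sub (hGsum _) (hGsum x)).symm
      rw [hsub, tsum_congr hterm,
        (has_pointwise_sum_fourier_series_of_summable hFsumm (x : AddCircle T)).tsum_eq]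
      exact hFcoe x
    have h5 := congrArg Complex.re key
    rw [Complex.sub_re, Complex.ofReal_re] at h5
    exact h5
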